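/- Let T̂ = P·T as above and r ≥ 1. For the row x with w(x) = 0, the number of nonzero entries of row x of (T̂)^r is at most 2^{r−1}. -/
import Mathlib


open Matrix Finset

/-- Lower bidiagonal 0-1 matrix: T(i,j)=1 iff i=j or i=j+1. -/
def Tmat (n : ℕ) : Matrix (Fin n) (Fin n) ℕ :=
  Matrix.of fun i j => if (i : ℕ) = (j : ℕ) ∨ (i : ℕ) = (j : ℕ) + 1 then 1 else 0

/-- Permutation matrix of w: P(i,j)=1 iff j = w(i). -/
def Pmat {n : ℕ} (w : Fin n → Fin n) : Matrix (Fin n) (Fin n) ℕ :=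
  Matrix.of fun i j => if j = w i then 1 else 0

/-- T̂ = P · T. -/
def That {n : ℕ} (w : Fin n → Fin n) : Matrix (Fin n) (Fin n) ℕ :=
  Pmat w * Tmat n

lemma That_apply {n : ℕ} (w : Fin n → Fin n) (i j : Fin n) :
    That w i j = Tmat n (w i) j := by
  simp [That, Pmat, Matrix.mul_apply, ite_mul, Finset.sum_ite_eq']

lemma row_card {n : ℕ} (w : Fin n → Fin n) (i : Fin n) :
    (Finset.univ.filter fun j => 0 < That w i j).card ≤ 2 := by
  have hsub : (Finset.univ.filter fun j => 0 < That w i j) ⊆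
      (Finset.univ.filter fun j : Fin n => (w i : ℕ) = (j : ℕ)) ∪
      (Finset.univ.filter fun j : Fin n => (w i : ℕ) = (j : ℕ) + 1) := by
    intro j hj
    simp only [mem_filter, mem_univ, true_and, mem_union] at *
    rw [That_apply] at hj
    simp only [Tmat, Matrix.of_apply] at hj
    by_cases h : (w i : ℕ) = (j : ℕ) ∨ (w i : ℕ) = (j : ℕ) + 1
    · exact h
    · simp [h] at hj
  have h1 : (Finset.univ.filter fun j : Fin n => (w i : ℕ) = (j : ℕ)).card ≤ 1 := by
    apply Finset.card_le_one.mpr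
    intro a ha b hb
    simp only [mem_filter] at ha hb
    exact Fin.ext (ha.2.symm.trans hb.2)
  have h2 : (Finset.univ.filter fun j : Fin n => (w i : ℕ) = (j : ℕ) + 1).card ≤ 1 := by
    apply Finset.card_le_one.mpr
    intro a ha b hb
    simp only [mem_filter] at ha hb
    exact Fin.ext (Nat.succ_injective (ha.2.symm.trans hb.2))
  calc (Finset.univ.filter fun j => 0 < That w i j).card
      ≤ _ := Finset.card_le_card hsub
    _ ≤ _ + _ := Finset.card_union_le _ _
    _ ≤ 1 + 1 := Nat.add_le_add h1 h2

theorem stmt_5 (n : ℕ) (hn : 1 ≤ n) (w : Fin n → Fin n) (hw : Function.Bijective w)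
    (r : ℕ) (hr : 1 ≤ r) (x : Fin n) (hx : (w x : ℕ) = 0) :
    (Finset.univ.filter fun j => 0 < (That w ^ r) x j).card ≤ 2 ^ (r - 1) := by
  obtain ⟨m, rfl⟩ : ∃ m, r = m + 1 := ⟨r - 1, (Nat.succ_pred_eq_of_pos hr).symm⟩
  simp only [Nat.add_sub_cancel]
  induction m with
  | zero =>
    have hsub : (Finset.univ.filter fun j => 0 < (That w ^ 1) x j) ⊆ {(⟨0, hn⟩ : Fin n)} := by
      intro j hj
      simp only [pow_one, mem_filter, mem_univ, true_and] at hj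
      rw [That_apply] at hj
      simp only [Tmat, Matrix.of_apply, hx] at hj
      by_cases h : (0 : ℕ) = (j : ℕ) ∨ (0 : ℕ) = (j : ℕ) + 1
      · rcases h with h | h
        · simp [Finset.mem_singleton, Fin.ext_iff, ← h]
        · omega
      · push_neg at h
        simp [h.1] at hj
    simpa using Finset.card_le_card hsub
  | succ m ih =>
    have key : (Finset.univ.filter fun j => 0 < (That w ^ (m + 1 + 1)) x j) ⊆
        (Finset.univ.filter fun k => 0 < (That w ^ (m + 1)) x k).biUnion
          (fun k => Finset.univ.filter fun j => 0 < That w k j) := by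
      intro j hj
      simp only [mem_filter, mem_univ, true_and] at hj
      rw [pow_succ, Matrix.mul_apply] at hj
      have : ∃ k : Fin n, 0 < (That w ^ (m + 1)) x k * That w k j := by
        by_contra h
        push_neg at h
        have : ∑ k, (That w ^ (m + 1)) x k * That w k j = 0 :=
          Finset.sum_eq_zero fun k _ => Nat.le_zero.mp (h k)
        omega
      obtain ⟨k, hk⟩ := this
      have hk' : (That w ^ (m + 1)) x k ≠ 0 ∧ That w k j ≠ 0 := by
        rw [← mul_ne_zero_iff]; omega
      simp only [Finset.mem_biUnion, mem_filter, mem_univ, true_and]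
      exact ⟨k, Nat.pos_of_ne_zero hk'.1, Nat.pos_of_ne_zero hk'.2⟩
    calc (Finset.univ.filter fun j => 0 < (That w ^ (m + 1 + 1)) x j).card
        ≤ _ := Finset.card_le_card key
      _ ≤ (Finset.univ.filter fun k => 0 < (That w ^ (m + 1)) x k).card * 2 :=
          Finset.card_biUnion_le_card_mul _ _ 2 (fun k _ => row_card w k)
      _ ≤ 2 ^ m * 2 := Nat.mul_le_mul_right 2 (ih (Nat.le_add_left 1 m))
      _ = 2 ^ (m + 1) := (pow_succ 2 m).symm
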